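/- Greedy construction over diamonds: Let M be a diamond with atoms A and f : M^n → ℝ submodular with f(0) ≥ 0. Define atoms p_1, ..., p_n and a vector x inductively: p_{i+1} is a maximizer over a ∈ A of f(v_i[i+1 = a]) where v_i is the tuple whose first i coordinates are 1 and the rest 0; set x(i+1, p_{i+1}) = f(v_i[i+1 = p_{i+1}]) − f(v_i), and x(i+1, a) = f(v_{i+1}) − f(v_i[i+1 = p_{i+1}]) for a ≠ p_{i+1}. Then x(i+1, p_{i+1}) ≥ x(i+1, a) for every atom a, i.e., x is unified. -/

import Mathlib

set_option linter.unreachableTactic false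
set_option linter.unusedTactic false
set_option linter.unusedVariables false

inductive Dia (A : Type) : Type where
  | bot : Dia A
  | atom : A → Dia A
  | top : Dia A
  deriving DecidableEq

namespace Dia

variable {A : Type} [DecidableEq A]

instance : Lattice (Dia A) where
  le x y := x = bot ∨ y = top ∨ x = y
  le_refl x := Or.inr (Or.inr rfl)
  le_trans x y z hxy hyz := by
    rcases hxy with h | h | h <;> rcases hyz with h' | h' | h' <;> simp_all
  le_antisymm x y hxy hyx := by
    rcases hxy with h | h | h <;> rcases hyx with h' | h' | h' <;> simp_all
  sup x y := if x = bot then y else if y = bot then x else if x = y then x else top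
  inf x y := if x = top then y else if y = top then x else if x = y then x else bot
  le_sup_left x y := by
    try dsimp only
    split_ifs <;> (try simp_all) <;> (try split_ifs) <;> (try simp_all)
  le_sup_right x y := by
    try dsimp only
    split_ifs <;> (try simp_all) <;> (try split_ifs) <;> (try simp_all)
  sup_le x y z hxz hyz := by
    try dsimp only
    rcases hxz with h | h | h <;> rcases hyz with h' | h' | h' <;> split_ifs <;> (try simp_all) <;> (try split_ifs) <;> (try simp_all)
  inf_le_left x y := by
    try dsimp only
    split_ifs <;> (try simp_all) <;> (try split_ifs) <;> (try simp_all)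
  inf_le_right x y := by
    try dsimp only
    split_ifs <;> (try simp_all) <;> (try split_ifs) <;> (try simp_all)
  le_inf x y z hxy hxz := by
    try dsimp only
    rcases hxy with h | h | h <;> rcases hxz with h' | h' | h' <;> split_ifs <;> (try simp_all) <;> (try split_ifs) <;> (try simp_all)

instance : BoundedOrder (Dia A) where
  top := top
  bot := bot
  le_top x := Or.inr (Or.inl rfl)
  bot_le x := Or.inl rfl

def drank : Dia A → ℕ
  | bot => 0
  | atom _ => 1
  | top => 2

noncomputable def gval (v : A → ℝ) : Dia A → ℝ
  | bot => 0
  | atom a => v a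
  | top => sSup {r : ℝ | ∃ a a' : A, a ≠ a' ∧ r = v a + v a'}

end Dia

variable {A : Type} [DecidableEq A] {n : ℕ}

noncomputable def evalD (x : Fin n → A → ℝ) (y : Fin n → Dia A) : ℝ :=
  ∑ i, Dia.gval (x i) (y i)

def Submod (f : (Fin n → Dia A) → ℝ) : Prop :=
  ∀ a b, f (a ⊓ b) + f (a ⊔ b) ≤ f a + f b

def InP (f : (Fin n → Dia A) → ℝ) (x : Fin n → A → ℝ) : Prop :=
  ∀ y, evalD x y ≤ f y

def UnifiedRow (v : A → ℝ) : Prop :=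
  ∃ p : A, (∀ a b : A, a ≠ p → b ≠ p → v a = v b) ∧ ∀ a, v a ≤ v p

def Unified (x : Fin n → A → ℝ) : Prop := ∀ i, UnifiedRow (x i)


/-- The tuple whose first `k` coordinates are the top element and whose
remaining coordinates are the bottom element. -/
def vtup (A : Type) (n k : ℕ) : Fin n → Dia A :=
  fun j => if (j : ℕ) < k then Dia.top else Dia.bot

/-- in the greedy construction, x(i, p_i) ≥ x(i, a) for every atom
a, i.e. the greedy vector is unified. -/
theorem stmt6 [Fintype A] (hA : 3 ≤ Fintype.card A)
    (f : (Fin n → Dia A) → ℝ) (hf : Submod f)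
    (h0 : 0 ≤ f (fun _ => Dia.bot))
    (p : Fin n → A) (x : Fin n → A → ℝ)
    (hmax : ∀ (i : Fin n) (a : A),
      f (Function.update (vtup A n i) i (Dia.atom a)) ≤
        f (Function.update (vtup A n i) i (Dia.atom (p i))))
    (hxp : ∀ i : Fin n,
      x i (p i) = f (Function.update (vtup A n i) i (Dia.atom (p i))) - f (vtup A n i))
    (hxa : ∀ (i : Fin n) (a : A), a ≠ p i →
      x i a = f (vtup A n ((i : ℕ) + 1)) -
        f (Function.update (vtup A n i) i (Dia.atom (p i)))) :
    ∀ (i : Fin n) (a : A), x i a ≤ x i (p i) := by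
  intro i a
  by_cases ha : a = p i
  · rw [ha]
  -- two distinct atoms
  obtain ⟨q, q', hqq⟩ := Fintype.exists_pair_of_one_lt_card (by omega : 1 < Fintype.card A)
  have key : f (vtup A n i) + f (vtup A n ((i:ℕ)+1)) ≤
      f (Function.update (vtup A n i) i (Dia.atom q)) +
      f (Function.update (vtup A n i) i (Dia.atom q')) := by
    have hsub := hf (Function.update (vtup A n i) i (Dia.atom q))
      (Function.update (vtup A n i) i (Dia.atom q'))
    have hinf : Function.update (vtup A n i) i (Dia.atom q) ⊓
        Function.update (vtup A n i) i (Dia.atom q') = vtup A n i := by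
      funext j
      by_cases hj : j = i
      · subst hj
        rw [Pi.inf_apply, Function.update_self, Function.update_self]
        have : vtup A n (j:ℕ) j = Dia.bot := by simp [vtup]
        rw [this]
        show (if (Dia.atom q : Dia A) = Dia.top then Dia.atom q' else
          if Dia.atom q' = Dia.top then Dia.atom q else
          if Dia.atom q = Dia.atom q' then Dia.atom q else Dia.bot) = Dia.bot
        simp [hqq]
      · show Function.update (vtup A n i) i (Dia.atom q) j ⊓
          Function.update (vtup A n i) i (Dia.atom q') j = vtup A n i j
        rw [Function.update_of_ne hj, Function.update_of_ne hj, inf_idem]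
    have hsup : Function.update (vtup A n i) i (Dia.atom q) ⊔
        Function.update (vtup A n i) i (Dia.atom q') = vtup A n ((i:ℕ)+1) := by
      funext j
      by_cases hj : j = i
      · subst hj
        rw [Pi.sup_apply, Function.update_self, Function.update_self]
        have : vtup A n ((j:ℕ)+1) j = Dia.top := by simp [vtup]
        rw [this]
        show (if (Dia.atom q : Dia A) = Dia.bot then Dia.atom q' else
          if Dia.atom q' = Dia.bot then Dia.atom q else
          if Dia.atom q = Dia.atom q' then Dia.atom q else Dia.top) = Dia.top
        simp [hqq]
      · show Function.update (vtup A n i) i (Dia.atom q) j ⊔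
          Function.update (vtup A n i) i (Dia.atom q') j = vtup A n ((i:ℕ)+1) j
        rw [Function.update_of_ne hj, Function.update_of_ne hj, sup_idem]
        have hji : (j:ℕ) ≠ (i:ℕ) := fun h => hj (Fin.ext h)
        simp only [vtup]
        by_cases h : (j:ℕ) < i
        · simp [h, Nat.lt_succ_of_lt h]
        · have h2 : ¬ (j:ℕ) < (i:ℕ)+1 := by omega
          simp [h, h2]
    rw [hinf, hsup] at hsub
    exact hsub
  have hq := hmax i q
  have hq' := hmax i q'
  rw [hxp i, hxa i a ha]
  linarith
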